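/- Triple path lemma: let s, t be vertices, [u, v] an interval of vertices on the (unique) shortest path from s to t with u before (or equal to) v, f a vertex on [u, v] with f ≠ s, t, and F any admissible value, i.e., a real number satisfying d(s,t ∣ avoid [u,v]) ≥ F ≥ d(s,t ∣ avoid f). Then d(s,t ∣ avoid f) = min{ d(s,u) + d(u,t ∣ avoid f), d(s,v ∣ avoid f) + d(v,t), F }. -/

import Mathlib

open scoped ENNReal

/-- Cost of a walk, given as a list of vertices, in a weighted digraph:
the sum of the weights of consecutive pairs.  Non-edges have weight `⊤`. -/
noncomputable def walkCost {V : Type*} (w : V → V → ℝ≥0∞) : List V → ℝ≥0∞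
  | [] => 0
  | [_] => 0
  | a :: b :: l => w a b + walkCost w (b :: l)

/-- `p` is a walk from `s` to `t`. -/
def IsWalkFromTo {V : Type*} (s t : V) (p : List V) : Prop :=
  p.head? = some s ∧ p.getLast? = some t

/-- `d(s,t ∣ avoid A)`: the length of the shortest walk from `s` to `t`
avoiding every vertex of `A` (`⊤` if none exists). -/
noncomputable def dAvoid {V : Type*} (w : V → V → ℝ≥0∞) (s t : V) (A : Set V) : ℝ≥0∞ :=
  ⨅ p ∈ {p : List V | IsWalkFromTo s t p ∧ ∀ x ∈ p, x ∉ A}, walkCost w p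

/-- All-pairs unique shortest paths. -/
def UniqueSP {V : Type*} (w : V → V → ℝ≥0∞) : Prop :=
  ∀ a b : V, dAvoid w a b ∅ ≠ ⊤ →
    ∃! p : List V, IsWalkFromTo a b p ∧ walkCost w p = dAvoid w a b ∅

/-- The set of vertices of the path `P` with positions in `[iu, iv]`:
the interval `[u, v]` on `P`. -/
def intervalSet {V : Type*} (P : List V) (iu iv : ℕ) : Set V :=
  {x | ∃ i : ℕ, iu ≤ i ∧ i ≤ iv ∧ P[i]? = some x}

section Infra
variable {V : Type*} (w : V → V → ℝ≥0∞)

lemma walkCost_nil : walkCost w ([] : List V) = 0 := rfl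
lemma walkCost_single (a : V) : walkCost w [a] = 0 := rfl
lemma walkCost_cons_cons (a b : V) (l : List V) :
    walkCost w (a :: b :: l) = w a b + walkCost w (b :: l) := rfl

lemma walkCost_le_cons (a : V) (l : List V) : walkCost w l ≤ walkCost w (a :: l) := by
  cases l with
  | nil => simp [walkCost_nil, walkCost_single]
  | cons b l => rw [walkCost_cons_cons]; exact le_add_self

lemma walkCost_tail_le (l : List V) : walkCost w l.tail ≤ walkCost w l := by
  cases l with
  | nil => exact le_rfl
  | cons a l => exact walkCost_le_cons w a l

lemma walkCost_drop_le (n : ℕ) (l : List V) : walkCost w (l.drop n) ≤ walkCost w l := by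
  induction n with
  | zero => simp
  | succ n ih =>
    calc walkCost w (l.drop (n+1)) = walkCost w (l.drop n).tail := by rw [List.tail_drop]
    _ ≤ walkCost w (l.drop n) := walkCost_tail_le w _
    _ ≤ walkCost w l := ih

lemma walkCost_append {x : V} {A B : List V} (hA : A.getLast? = some x)
    (hB : B.head? = some x) :
    walkCost w (A ++ B.tail) = walkCost w A + walkCost w B := by
  induction A with
  | nil => simp at hA
  | cons a A ih =>
    cases A with
    | nil =>
      obtain rfl : a = x := by simpa using hA
      cases B with
      | nil => simp at hB
      | cons b B =>
        obtain rfl : b = a := by simpa using hB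
        cases B with
        | nil => simp [walkCost_single]
        | cons c B => simp [walkCost_single, walkCost_cons_cons]
    | cons a' A' =>
      have hA' : (a' :: A').getLast? = some x := by rwa [List.getLast?_cons_cons] at hA
      have := ih hA'
      calc walkCost w ((a :: a' :: A') ++ B.tail)
          = w a a' + walkCost w ((a' :: A') ++ B.tail) := rfl
        _ = w a a' + (walkCost w (a' :: A') + walkCost w B) := by rw [this]
        _ = walkCost w (a :: a' :: A') + walkCost w B := by
            rw [walkCost_cons_cons, add_assoc]

lemma IsWalkFromTo.splice {a x b : V} {A B : List V} (hA : IsWalkFromTo a x A)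
    (hB : IsWalkFromTo x b B) : IsWalkFromTo a b (A ++ B.tail) := by
  obtain ⟨hA1, hA2⟩ := hA
  obtain ⟨hB1, hB2⟩ := hB
  constructor
  · cases A with
    | nil => simp at hA1
    | cons c A => simpa using hA1
  · cases B with
    | nil => simp at hB1
    | cons y B =>
      simp only [List.head?_cons, Option.some.injEq] at hB1
      subst hB1
      cases B with
      | nil =>
        simp only [List.getLast?_singleton, Option.some.injEq] at hB2
        subst hB2
        simpa using hA2
      | cons z B =>
        rw [List.tail_cons, List.getLast?_append_of_ne_nil A (by simp)]
        rwa [List.getLast?_cons_cons] at hB2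

lemma dAvoid_le {s t : V} {A : Set V} {p : List V} (hp : IsWalkFromTo s t p)
    (hav : ∀ x ∈ p, x ∉ A) : dAvoid w s t A ≤ walkCost w p :=
  iInf₂_le p ⟨hp, hav⟩

lemma dAvoid_mono {s t : V} {A B : Set V} (h : A ⊆ B) :
    dAvoid w s t A ≤ dAvoid w s t B :=
  le_iInf₂ fun p hp => dAvoid_le w hp.1 fun x hx hxA => hp.2 x hx (h hxA)

lemma exists_walk_of_lt {s t : V} {A : Set V} {c : ℝ≥0∞} (h : dAvoid w s t A < c) :
    ∃ p, IsWalkFromTo s t p ∧ (∀ x ∈ p, x ∉ A) ∧ walkCost w p < c := by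
  by_contra hc
  push_neg at hc
  exact absurd h (not_lt.2 (le_iInf₂ fun p hp => hc p hp.1 hp.2))

lemma walk_take {s x : V} {P : List V} {i : ℕ} (hs : P.head? = some s)
    (hx : P[i]? = some x) : IsWalkFromTo s x (P.take (i+1)) := by
  have hi : i < P.length := (List.getElem?_eq_some_iff.1 hx).1
  constructor
  · rw [List.head?_take]; simp [hs]
  · rw [List.getLast?_eq_getElem?, List.length_take]
    have : (i + 1) ⊓ P.length - 1 = i := by omega
    rw [this, List.getElem?_take]
    simp [hx]

lemma walk_drop {x t : V} {P : List V} {i : ℕ} (ht : P.getLast? = some t)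
    (hx : P[i]? = some x) : IsWalkFromTo x t (P.drop i) := by
  have hi : i < P.length := (List.getElem?_eq_some_iff.1 hx).1
  constructor
  · rw [List.head?_drop]; exact hx
  · rw [List.getLast?_eq_getElem?, List.length_drop, List.getElem?_drop]
    have : i + (P.length - i - 1) = P.length - 1 := by omega
    rw [this]
    rwa [List.getLast?_eq_getElem?] at ht

lemma walkCost_split {P : List V} {i : ℕ} {x : V} (hx : P[i]? = some x) :
    walkCost w P = walkCost w (P.take (i+1)) + walkCost w (P.drop i) := by
  have hi : i < P.length := (List.getElem?_eq_some_iff.1 hx).1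
  have hlast : (P.take (i+1)).getLast? = some x := by
    rw [List.getLast?_eq_getElem?, List.length_take]
    have : (i + 1) ⊓ P.length - 1 = i := by omega
    rw [this, List.getElem?_take]; simp [hx]
  have hhead : (P.drop i).head? = some x := by rw [List.head?_drop]; exact hx
  have : P.take (i+1) ++ (P.drop i).tail = P := by
    rw [List.tail_drop, List.take_append_drop]
  conv_lhs => rw [← this]
  exact walkCost_append w hlast hhead

lemma exists_dup_of_not_nodup {l : List V} (hn : ¬ l.Nodup) :
    ∃ i j, i < j ∧ j < l.length ∧ l[i]? = l[j]? := by
  by_contra hc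
  push_neg at hc
  apply hn
  rw [List.nodup_iff_injective_get]
  rintro ⟨i, hi⟩ ⟨j, hj⟩ hab
  simp only [Fin.mk.injEq]
  rcases Nat.lt_trichotomy i j with h' | h' | h'
  · refine absurd ?_ (hc i j h' hj)
    rw [List.getElem?_eq_getElem hi, List.getElem?_eq_getElem hj]
    simpa using hab
  · exact h'
  · refine absurd ?_ (hc j i h' hi)
    rw [List.getElem?_eq_getElem hi, List.getElem?_eq_getElem hj]
    simpa using hab.symm

end Infra

section Layer2
variable {V : Type*} (w : V → V → ℝ≥0∞) {s t : V} {P : List V}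

lemma prefix_shortest (hP : IsWalkFromTo s t P) (hPcost : walkCost w P = dAvoid w s t ∅)
    (hfin : walkCost w P ≠ ⊤) {i : ℕ} {x : V} (hx : P[i]? = some x) :
    walkCost w (P.take (i+1)) = dAvoid w s x ∅ := by
  refine le_antisymm ?_ (dAvoid_le w (walk_take hP.1 hx) (by simp))
  by_contra hlt
  push_neg at hlt
  obtain ⟨q, hq, -, hqc⟩ := exists_walk_of_lt w hlt
  have hdropfin : walkCost w (P.drop i) ≠ ⊤ :=
    fun h => hfin (top_le_iff.1 (h ▸ walkCost_drop_le w i P))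
  have hwalk : IsWalkFromTo s t (q ++ (P.drop i).tail) := hq.splice (walk_drop hP.2 hx)
  have hcost : walkCost w (q ++ (P.drop i).tail) = walkCost w q + walkCost w (P.drop i) :=
    walkCost_append w hq.2 (by rw [List.head?_drop]; exact hx)
  have h1 : dAvoid w s t ∅ ≤ walkCost w q + walkCost w (P.drop i) :=
    hcost ▸ dAvoid_le w hwalk (by simp)
  have h2 : walkCost w q + walkCost w (P.drop i) < walkCost w P := by
    rw [walkCost_split w hx]
    exact ENNReal.add_lt_add_right hdropfin hqc
  rw [hPcost] at h2
  exact absurd (lt_of_le_of_lt h1 h2) (lt_irrefl _)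

lemma suffix_shortest (hP : IsWalkFromTo s t P) (hPcost : walkCost w P = dAvoid w s t ∅)
    (hfin : walkCost w P ≠ ⊤) {i : ℕ} {x : V} (hx : P[i]? = some x) :
    walkCost w (P.drop i) = dAvoid w x t ∅ := by
  refine le_antisymm ?_ (dAvoid_le w (walk_drop hP.2 hx) (by simp))
  by_contra hlt
  push_neg at hlt
  obtain ⟨q, hq, -, hqc⟩ := exists_walk_of_lt w hlt
  have htakefin : walkCost w (P.take (i+1)) ≠ ⊤ := by
    intro h
    apply hfin
    rw [walkCost_split w hx, h, top_add]
  have hwalk : IsWalkFromTo s t (P.take (i+1) ++ q.tail) := (walk_take hP.1 hx).splice hq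
  have hcost : walkCost w (P.take (i+1) ++ q.tail) = walkCost w (P.take (i+1)) + walkCost w q :=
    walkCost_append w (walk_take hP.1 hx).2 hq.1
  have h1 : dAvoid w s t ∅ ≤ walkCost w (P.take (i+1)) + walkCost w q :=
    hcost ▸ dAvoid_le w hwalk (by simp)
  have h2 : walkCost w (P.take (i+1)) + walkCost w q < walkCost w P := by
    rw [walkCost_split w hx]
    exact ENNReal.add_lt_add_left htakefin hqc
  rw [hPcost] at h2
  exact absurd (lt_of_le_of_lt h1 h2) (lt_irrefl _)

lemma nodup_of_usp (husp : UniqueSP w) (hP : IsWalkFromTo s t P)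
    (hPcost : walkCost w P = dAvoid w s t ∅) (hfin : walkCost w P ≠ ⊤) : P.Nodup := by
  by_contra hn
  obtain ⟨i, j, hij, hj, hdup⟩ := exists_dup_of_not_nodup hn
  have hi : i < P.length := hij.trans hj
  obtain ⟨x, hxj⟩ : ∃ x, P[j]? = some x := ⟨P[j], List.getElem?_eq_getElem hj⟩
  have hxi : P[i]? = some x := by rw [hdup]; exact hxj
  have hwalk : IsWalkFromTo s t (P.take (i+1) ++ (P.drop j).tail) :=
    (walk_take hP.1 hxi).splice (walk_drop hP.2 hxj)
  have hcost : walkCost w (P.take (i+1) ++ (P.drop j).tail) =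
      walkCost w (P.take (i+1)) + walkCost w (P.drop j) :=
    walkCost_append w (walk_take hP.1 hxi).2 (by rw [List.head?_drop]; exact hxj)
  have hle : walkCost w (P.take (i+1) ++ (P.drop j).tail) ≤ walkCost w P := by
    rw [hcost]
    conv_rhs => rw [walkCost_split w hxi]
    refine add_le_add le_rfl ?_
    have hdj : P.drop j = (P.drop i).drop (j - i) := by
      rw [List.drop_drop]; congr 1; omega
    rw [hdj]
    exact walkCost_drop_le w _ _
  have hcost' : walkCost w (P.take (i+1) ++ (P.drop j).tail) = dAvoid w s t ∅ :=
    le_antisymm (hle.trans hPcost.le) (dAvoid_le w hwalk (by simp))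
  have hdfin : dAvoid w s t ∅ ≠ ⊤ := by rw [← hPcost]; exact hfin
  obtain ⟨p₀, -, hpuniq⟩ := husp s t hdfin
  have e1 := hpuniq P ⟨hP, hPcost⟩
  have e2 := hpuniq _ ⟨hwalk, hcost'⟩
  have heq : P.take (i+1) ++ (P.drop j).tail = P := e2.trans e1.symm
  have hlen : (P.take (i+1) ++ (P.drop j).tail).length = P.length := by rw [heq]
  rw [List.length_append, List.length_take, List.length_tail, List.length_drop] at hlen
  have : (i+1) ⊓ P.length = i + 1 := by omega
  rw [this] at hlen
  omega

lemma le_add_dAvoid {u t : V} {A : Set V} {c e : ℝ≥0∞}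
    (h : ∀ p, IsWalkFromTo u t p → (∀ x ∈ p, x ∉ A) → e ≤ c + walkCost w p) :
    e ≤ c + dAvoid w u t A := by
  rw [dAvoid, ENNReal.add_iInf]
  refine le_iInf fun p => ?_
  rw [ENNReal.add_iInf]
  exact le_iInf fun hp => h p hp.1 hp.2

lemma le_dAvoid_add {s v : V} {A : Set V} {c e : ℝ≥0∞}
    (h : ∀ p, IsWalkFromTo s v p → (∀ x ∈ p, x ∉ A) → e ≤ walkCost w p + c) :
    e ≤ dAvoid w s v A + c := by
  rw [dAvoid, ENNReal.iInf_add]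
  refine le_iInf fun p => ?_
  rw [ENNReal.iInf_add]
  exact le_iInf fun hp => h p hp.1 hp.2

end Layer2

/-- **Triple path lemma.**  If `[u, v]` is an interval on the unique shortest path
from `s` to `t`, `f ∈ [u, v]` with `f ≠ s, t`, and `F` is any admissible value,
i.e. `d(s,t ∣ avoid [u,v]) ≥ F ≥ d(s,t ∣ avoid f)`, then
`d(s,t ∣ avoid f) = min { d(s,u) + d(u,t ∣ avoid f), d(s,v ∣ avoid f) + d(v,t), F }`. -/
theorem triple_path_lemma {V : Type*} (w : V → V → ℝ≥0∞)
    (husp : UniqueSP w)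
    (s t u v f : V) (P : List V)
    (hP : IsWalkFromTo s t P) (hPcost : walkCost w P = dAvoid w s t ∅)
    (iu iv ifi : ℕ)
    (hu : P[iu]? = some u) (hv : P[iv]? = some v) (hf : P[ifi]? = some f)
    (huf : iu ≤ ifi) (hfv : ifi ≤ iv)
    (hfs : f ≠ s) (hft : f ≠ t)
    (F : ℝ≥0∞)
    (hF1 : dAvoid w s t (intervalSet P iu iv) ≥ F)
    (hF2 : F ≥ dAvoid w s t {f}) :
    dAvoid w s t {f} =
      min (min (dAvoid w s u ∅ + dAvoid w u t {f})
               (dAvoid w s v {f} + dAvoid w v t ∅)) F := by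
  classical
  by_cases htop : walkCost w P = ⊤
  · -- degenerate case: no finite walk from s to t at all
    have hdtop : dAvoid w s t ∅ = ⊤ := by rw [← hPcost]; exact htop
    have hftop : dAvoid w s t {f} = ⊤ :=
      top_le_iff.1 (hdtop ▸ dAvoid_mono w (Set.empty_subset _))
    have hFtop : F = ⊤ := top_le_iff.1 (hftop ▸ hF2)
    have hA : dAvoid w s u ∅ + dAvoid w u t {f} = ⊤ := by
      by_contra hc
      obtain ⟨h1, h2⟩ := ENNReal.add_ne_top.1 hc
      obtain ⟨q1, hq1, -, hq1c⟩ := exists_walk_of_lt w (lt_top_iff_ne_top.2 h1)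
      obtain ⟨q2, hq2, -, hq2c⟩ := exists_walk_of_lt w (lt_top_iff_ne_top.2 h2)
      have hw := hq1.splice hq2
      have hc2 : walkCost w (q1 ++ q2.tail) = walkCost w q1 + walkCost w q2 :=
        walkCost_append w hq1.2 hq2.1
      have hle := dAvoid_le w (A := (∅ : Set V)) hw (by simp)
      rw [hdtop, top_le_iff, hc2] at hle
      exact (ENNReal.add_lt_top.2 ⟨hq1c, hq2c⟩).ne hle
    have hB : dAvoid w s v {f} + dAvoid w v t ∅ = ⊤ := by
      by_contra hc
      obtain ⟨h1, h2⟩ := ENNReal.add_ne_top.1 hc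
      obtain ⟨q1, hq1, -, hq1c⟩ := exists_walk_of_lt w (lt_top_iff_ne_top.2 h1)
      obtain ⟨q2, hq2, -, hq2c⟩ := exists_walk_of_lt w (lt_top_iff_ne_top.2 h2)
      have hw := hq1.splice hq2
      have hc2 : walkCost w (q1 ++ q2.tail) = walkCost w q1 + walkCost w q2 :=
        walkCost_append w hq1.2 hq2.1
      have hle := dAvoid_le w (A := (∅ : Set V)) hw (by simp)
      rw [hdtop, top_le_iff, hc2] at hle
      exact (ENNReal.add_lt_top.2 ⟨hq1c, hq2c⟩).ne hle
    rw [hftop, hA, hB, hFtop]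
    simp
  · -- main case
    have hfin := htop
    have hnd : P.Nodup := nodup_of_usp w husp hP hPcost hfin
    have hinj : ∀ {i j : ℕ} {x : V}, P[i]? = some x → P[j]? = some x → i = j := by
      intro i j x h1 h2
      exact (List.getElem?_inj (List.getElem?_eq_some_iff.1 h1).1 hnd).1 (h1.trans h2.symm)
    have htake_av : ∀ n, n ≤ ifi → ∀ x ∈ P.take n, x ∉ ({f} : Set V) := by
      intro n hn x hx hxf
      rw [Set.mem_singleton_iff] at hxf
      subst hxf
      obtain ⟨j, hj⟩ := List.mem_iff_getElem?.1 hx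
      rw [List.getElem?_take] at hj
      by_cases hjn : j < n
      · rw [if_pos hjn] at hj
        have := hinj hj hf
        omega
      · rw [if_neg hjn] at hj
        simp at hj
    have hdrop_av : ∀ n, ifi < n → ∀ x ∈ P.drop n, x ∉ ({f} : Set V) := by
      intro n hn x hx hxf
      rw [Set.mem_singleton_iff] at hxf
      subst hxf
      obtain ⟨j, hj⟩ := List.mem_iff_getElem?.1 hx
      rw [List.getElem?_drop] at hj
      have := hinj hj hf
      omega
    have hd_su : walkCost w (P.take (iu+1)) = dAvoid w s u ∅ :=
      prefix_shortest w hP hPcost hfin hu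
    have hd_vt : walkCost w (P.drop iv) = dAvoid w v t ∅ :=
      suffix_shortest w hP hPcost hfin hv
    refine le_antisymm (le_min (le_min ?_ ?_) hF2) ?_
    · -- d(s,t | f) ≤ d(s,u) + d(u,t | f)
      refine le_add_dAvoid w fun p hp hav => ?_
      have hup : u ∈ p := List.mem_of_mem_head? (Option.mem_def.2 hp.1)
      have hunf : u ≠ f := fun h => hav u hup (Set.mem_singleton_iff.2 h)
      have hiuf : iu < ifi := by
        rcases Nat.lt_or_ge iu ifi with h | h
        · exact h
        · have : iu = ifi := le_antisymm huf h
          rw [this] at hu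
          exact absurd (Option.some_inj.1 (hu.symm.trans hf)) hunf
      have hw : IsWalkFromTo s t (P.take (iu+1) ++ p.tail) := (walk_take hP.1 hu).splice hp
      have hav' : ∀ x ∈ P.take (iu+1) ++ p.tail, x ∉ ({f} : Set V) := by
        intro x hx
        rcases List.mem_append.1 hx with h | h
        · exact htake_av (iu+1) (by omega) x h
        · exact hav x (List.mem_of_mem_tail h)
      have hc : walkCost w (P.take (iu+1) ++ p.tail) =
          walkCost w (P.take (iu+1)) + walkCost w p :=
        walkCost_append w (walk_take hP.1 hu).2 hp.1
      calc dAvoid w s t {f} ≤ walkCost w (P.take (iu+1) ++ p.tail) := dAvoid_le w hw hav'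
        _ = dAvoid w s u ∅ + walkCost w p := by rw [hc, hd_su]
    · -- d(s,t | f) ≤ d(s,v | f) + d(v,t)
      refine le_dAvoid_add w fun p hp hav => ?_
      have hvp : v ∈ p := List.mem_of_mem_getLast? (Option.mem_def.2 hp.2)
      have hvnf : v ≠ f := fun h => hav v hvp (Set.mem_singleton_iff.2 h)
      have hfiv : ifi < iv := by
        rcases Nat.lt_or_ge ifi iv with h | h
        · exact h
        · have : ifi = iv := le_antisymm hfv h
          rw [this] at hf
          exact absurd (Option.some_inj.1 (hv.symm.trans hf)) hvnf
      have hw : IsWalkFromTo s t (p ++ (P.drop iv).tail) := hp.splice (walk_drop hP.2 hv)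
      have hav' : ∀ x ∈ p ++ (P.drop iv).tail, x ∉ ({f} : Set V) := by
        intro x hx
        rcases List.mem_append.1 hx with h | h
        · exact hav x h
        · exact hdrop_av iv hfiv x (List.mem_of_mem_tail h)
      have hc : walkCost w (p ++ (P.drop iv).tail) =
          walkCost w p + walkCost w (P.drop iv) :=
        walkCost_append w hp.2 (by rw [List.head?_drop]; exact hv)
      calc dAvoid w s t {f} ≤ walkCost w (p ++ (P.drop iv).tail) := dAvoid_le w hw hav'
        _ = walkCost w p + dAvoid w v t ∅ := by rw [hc, hd_vt]
    · -- min(...) ≤ d(s,t | f)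
      conv_rhs => rw [dAvoid]
      refine le_iInf₂ fun q hq => ?_
      obtain ⟨hqw, hqav⟩ := hq
      by_cases hex : ∃ x ∈ q, x ∈ intervalSet P iu iv
      · obtain ⟨x, hxq, hxint⟩ := hex
        obtain ⟨i, hiui, hiiv, hxi⟩ := hxint
        have hxnf : x ≠ f := fun h => hqav x hxq (Set.mem_singleton_iff.2 h)
        have hiifi : i ≠ ifi := by
          intro h
          rw [h] at hxi
          exact hxnf (Option.some_inj.1 (hxi.symm.trans hf))
        obtain ⟨k, hk⟩ := List.mem_iff_getElem?.1 hxq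
        have hsplitq := walkCost_split w hk
        have hq1w : IsWalkFromTo s x (q.take (k+1)) := walk_take hqw.1 hk
        have hq2w : IsWalkFromTo x t (q.drop k) := walk_drop hqw.2 hk
        rcases Nat.lt_or_ge i ifi with hlt | hge
        · -- x is strictly before f on P : bound via the u-term
          refine le_trans (min_le_left _ _) (le_trans (min_le_left _ _) ?_)
          have hxP : walkCost w (P.take (i+1)) = dAvoid w s x ∅ :=
            prefix_shortest w hP hPcost hfin hxi
          have huL : (P.take (i+1))[iu]? = some u := by
            rw [List.getElem?_take, if_pos (by omega : iu < i + 1)]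
            exact hu
          have hsplitP : walkCost w (P.take (i+1)) =
              walkCost w ((P.take (i+1)).take (iu+1)) + walkCost w ((P.take (i+1)).drop iu) :=
            walkCost_split w huL
          have htt : (P.take (i+1)).take (iu+1) = P.take (iu+1) := by
            rw [List.take_take]
            congr 1
            omega
          have hsegw : IsWalkFromTo u x ((P.take (i+1)).drop iu) :=
            walk_drop (walk_take hP.1 hxi).2 huL
          have hr2w : IsWalkFromTo u t ((P.take (i+1)).drop iu ++ (q.drop k).tail) :=
            hsegw.splice hq2w
          have hr2c : walkCost w ((P.take (i+1)).drop iu ++ (q.drop k).tail) =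
              walkCost w ((P.take (i+1)).drop iu) + walkCost w (q.drop k) :=
            walkCost_append w hsegw.2 hq2w.1
          have hr2av : ∀ y ∈ (P.take (i+1)).drop iu ++ (q.drop k).tail, y ∉ ({f} : Set V) := by
            intro y hy
            rcases List.mem_append.1 hy with h | h
            · exact htake_av (i+1) (by omega) y (List.drop_subset _ _ h)
            · exact hqav y (List.drop_subset k q (List.mem_of_mem_tail h))
          have h1 : dAvoid w u t {f} ≤
              walkCost w ((P.take (i+1)).drop iu) + walkCost w (q.drop k) :=
            hr2c ▸ dAvoid_le w hr2w hr2av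
          have h2 : dAvoid w s x ∅ ≤ walkCost w (q.take (k+1)) := dAvoid_le w hq1w (by simp)
          calc dAvoid w s u ∅ + dAvoid w u t {f}
              ≤ walkCost w (P.take (iu+1)) +
                (walkCost w ((P.take (i+1)).drop iu) + walkCost w (q.drop k)) := by
                rw [hd_su]; exact add_le_add le_rfl h1
            _ = (walkCost w (P.take (iu+1)) + walkCost w ((P.take (i+1)).drop iu)) +
                walkCost w (q.drop k) := by rw [add_assoc]
            _ = walkCost w (P.take (i+1)) + walkCost w (q.drop k) := by
                rw [← htt, ← hsplitP]
            _ = dAvoid w s x ∅ + walkCost w (q.drop k) := by rw [hxP]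
            _ ≤ walkCost w (q.take (k+1)) + walkCost w (q.drop k) := add_le_add h2 le_rfl
            _ = walkCost w q := hsplitq.symm
        · -- x is strictly after f on P : bound via the v-term
          have hgt : ifi < i := lt_of_le_of_ne hge (Ne.symm hiifi)
          refine le_trans (min_le_left _ _) (le_trans (min_le_right _ _) ?_)
          have hxP : walkCost w (P.drop i) = dAvoid w x t ∅ :=
            suffix_shortest w hP hPcost hfin hxi
          have hvL : (P.drop i)[iv - i]? = some v := by
            rw [List.getElem?_drop]
            have he : i + (iv - i) = iv := by omega
            rw [he]
            exact hv
          have hsplitD : walkCost w (P.drop i) =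
              walkCost w ((P.drop i).take (iv - i + 1)) +
              walkCost w ((P.drop i).drop (iv - i)) :=
            walkCost_split w hvL
          have hdd : (P.drop i).drop (iv - i) = P.drop iv := by
            rw [List.drop_drop]
            congr 1
            omega
          have hsegw : IsWalkFromTo x v ((P.drop i).take (iv - i + 1)) :=
            walk_take (walk_drop hP.2 hxi).1 hvL
          have hr1w : IsWalkFromTo s v (q.take (k+1) ++ ((P.drop i).take (iv - i + 1)).tail) :=
            hq1w.splice hsegw
          have hr1c : walkCost w (q.take (k+1) ++ ((P.drop i).take (iv - i + 1)).tail) =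
              walkCost w (q.take (k+1)) + walkCost w ((P.drop i).take (iv - i + 1)) :=
            walkCost_append w hq1w.2 hsegw.1
          have hr1av : ∀ y ∈ q.take (k+1) ++ ((P.drop i).take (iv - i + 1)).tail,
              y ∉ ({f} : Set V) := by
            intro y hy
            rcases List.mem_append.1 hy with h | h
            · exact hqav y (List.take_subset _ _ h)
            · exact hdrop_av i hgt y (List.take_subset _ _ (List.mem_of_mem_tail h))
          have h1 : dAvoid w s v {f} ≤
              walkCost w (q.take (k+1)) + walkCost w ((P.drop i).take (iv - i + 1)) :=
            hr1c ▸ dAvoid_le w hr1w hr1av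
          have h2 : dAvoid w x t ∅ ≤ walkCost w (q.drop k) := dAvoid_le w hq2w (by simp)
          calc dAvoid w s v {f} + dAvoid w v t ∅
              ≤ (walkCost w (q.take (k+1)) + walkCost w ((P.drop i).take (iv - i + 1))) +
                walkCost w (P.drop iv) := by
                rw [hd_vt]; exact add_le_add h1 le_rfl
            _ = walkCost w (q.take (k+1)) +
                (walkCost w ((P.drop i).take (iv - i + 1)) + walkCost w (P.drop iv)) := by
                rw [add_assoc]
            _ = walkCost w (q.take (k+1)) + walkCost w (P.drop i) := by
                rw [← hdd, ← hsplitD]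
            _ = walkCost w (q.take (k+1)) + dAvoid w x t ∅ := by rw [hxP]
            _ ≤ walkCost w (q.take (k+1)) + walkCost w (q.drop k) := add_le_add le_rfl h2
            _ = walkCost w q := hsplitq.symm
      · -- q avoids the whole interval : bound via F
        have hle : dAvoid w s t (intervalSet P iu iv) ≤ walkCost w q := by
          refine dAvoid_le w hqw ?_
          intro x hx hxi
          exact hex ⟨x, hx, hxi⟩
        exact le_trans (min_le_right _ _) (le_trans hF1 hle)
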